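/- arXiv:2404.05445 — 2 statements merged into one kernel-verified Lean document; each statement's English description precedes it below -/
import Mathlib

section
/- Let E : ℝ^d → ℝ be differentiable, m-strongly convex with L-Lipschitz gradient (0 < m ≤ L). Then for every x ∈ ℝ^d with ‖x‖ ≥ 4‖∇E(0)‖/m, one has ⟨x, ∇E(x)⟩ ≥ ‖∇E(0)‖·‖x‖ + (1/(4L))‖∇E(x)‖² - (1/(2L))‖∇E(0)‖². -/
open scoped InnerProductSpace

section Aux
variable {F : Type*} [NormedAddCommGroup F] [InnerProductSpace ℝ F] [CompleteSpace F]

lemma seg_hasDerivAt (E : F → ℝ) (E' : F → F) (hgrad : ∀ x, HasGradientAt E (E' x) x)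
    (a b : F) (t : ℝ) :
    HasDerivAt (fun s : ℝ => E (a + s • (b - a))) ⟪E' (a + t • (b - a)), b - a⟫_ℝ t := by
  have hc : HasDerivAt (fun s : ℝ => a + s • (b - a)) (b - a) t := by
    simpa using ((hasDerivAt_id t).smul_const (b - a)).const_add a
  have h := (hgrad (a + t • (b - a))).hasFDerivAt.comp_hasDerivAt t hc
  simp [InnerProductSpace.toDual_apply_apply] at h
  exact h

/-- lower bound: monotone gradient gives the convexity inequality. -/
lemma lower_bound (E : F → ℝ) (E' : F → F) (hgrad : ∀ x, HasGradientAt E (E' x) x)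
    (hmono : ∀ x x', (0:ℝ) ≤ ⟪x - x', E' x - E' x'⟫_ℝ) (a b : F) :
    E a + ⟪E' a, b - a⟫_ℝ ≤ E b := by
  set c : ℝ → F := fun s => a + s • (b - a) with hcdef
  set ψ : ℝ → ℝ := fun s => E (c s) - s * ⟪E' a, b - a⟫_ℝ with hψ
  have hψ' : ∀ t : ℝ, HasDerivAt ψ (⟪E' (c t), b - a⟫_ℝ - ⟪E' a, b - a⟫_ℝ) t := fun t =>
    (seg_hasDerivAt E E' hgrad a b t).sub (hasDerivAt_mul_const _)
  have hmonoOn : MonotoneOn ψ (Set.Icc (0:ℝ) 1) := by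
    apply monotoneOn_of_hasDerivWithinAt_nonneg (convex_Icc 0 1)
      (fun t _ => (hψ' t).continuousAt.continuousWithinAt)
      (f' := fun t => ⟪E' (c t), b - a⟫_ℝ - ⟪E' a, b - a⟫_ℝ)
      (fun t _ => (hψ' t).hasDerivWithinAt)
    intro t ht
    rw [interior_Icc] at ht
    have ht0 : 0 < t := ht.1
    have key : (0:ℝ) ≤ ⟪c t - a, E' (c t) - E' a⟫_ℝ := hmono _ _
    have hca : c t - a = t • (b - a) := by simp [hcdef]
    rw [hca, real_inner_smul_left] at key
    have : (0:ℝ) ≤ ⟪b - a, E' (c t) - E' a⟫_ℝ := nonneg_of_mul_nonneg_right key ht0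
    rw [real_inner_comm, inner_sub_left] at this
    linarith
  have h01 := hmonoOn (Set.mem_Icc.2 ⟨le_refl 0, zero_le_one⟩)
    (Set.mem_Icc.2 ⟨zero_le_one, le_refl 1⟩) zero_le_one
  have hc0 : c 0 = a := by simp [hcdef]
  have hc1 : c 1 = b := by simp [hcdef]
  simp only [hψ, hc0, hc1] at h01
  linarith

/-- descent lemma: Lipschitz gradient gives the quadratic upper bound. -/
lemma upper_bound (E : F → ℝ) (E' : F → F) (L : ℝ) (hL : 0 < L)
    (hgrad : ∀ x, HasGradientAt E (E' x) x)
    (hlip : ∀ x x', ‖E' x - E' x'‖ ≤ L * ‖x - x'‖) (a b : F) :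
    E b ≤ E a + ⟪E' a, b - a⟫_ℝ + L / 2 * ‖b - a‖ ^ 2 := by
  set c : ℝ → F := fun s => a + s • (b - a) with hcdef
  set ψ : ℝ → ℝ := fun s => E (c s) - s * ⟪E' a, b - a⟫_ℝ - L * s ^ 2 / 2 * ‖b - a‖ ^ 2 with hψ
  have hψ' : ∀ t : ℝ, HasDerivAt ψ
      (⟪E' (c t), b - a⟫_ℝ - ⟪E' a, b - a⟫_ℝ - L * t * ‖b - a‖ ^ 2) t := by
    intro t
    have h1 : HasDerivAt (fun s : ℝ => L * s ^ 2 / 2 * ‖b - a‖ ^ 2)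
        (L * t * ‖b - a‖ ^ 2) t := by
      have := (((hasDerivAt_pow 2 t).const_mul L).div_const 2).mul_const (‖b - a‖ ^ 2)
      refine this.congr_deriv ?_
      ring
    exact ((seg_hasDerivAt E E' hgrad a b t).sub (hasDerivAt_mul_const _)).sub h1
  have hanti : AntitoneOn ψ (Set.Icc (0:ℝ) 1) := by
    apply antitoneOn_of_hasDerivWithinAt_nonpos (convex_Icc 0 1)
      (fun t _ => (hψ' t).continuousAt.continuousWithinAt)
      (f' := fun t => ⟪E' (c t), b - a⟫_ℝ - ⟪E' a, b - a⟫_ℝ - L * t * ‖b - a‖ ^ 2)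
      (fun t _ => (hψ' t).hasDerivWithinAt)
    intro t ht
    rw [interior_Icc] at ht
    have ht0 : 0 < t := ht.1
    have h1 : ⟪E' (c t) - E' a, b - a⟫_ℝ ≤ ‖E' (c t) - E' a‖ * ‖b - a‖ :=
      real_inner_le_norm _ _
    have h2 : ‖E' (c t) - E' a‖ ≤ L * ‖c t - a‖ := hlip _ _
    have hca : c t - a = t • (b - a) := by simp [hcdef]
    have h3 : ‖c t - a‖ = t * ‖b - a‖ := by
      rw [hca, norm_smul, Real.norm_eq_abs, abs_of_pos ht0]
    have h4 : ⟪E' (c t) - E' a, b - a⟫_ℝ ≤ L * t * ‖b - a‖ ^ 2 := by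
      calc ⟪E' (c t) - E' a, b - a⟫_ℝ ≤ ‖E' (c t) - E' a‖ * ‖b - a‖ := h1
        _ ≤ L * (t * ‖b - a‖) * ‖b - a‖ := by
            apply mul_le_mul_of_nonneg_right _ (norm_nonneg _)
            rw [← h3]; exact h2
        _ = L * t * ‖b - a‖ ^ 2 := by ring
    rw [inner_sub_left] at h4
    linarith
  have h01 := hanti (Set.mem_Icc.2 ⟨le_refl 0, zero_le_one⟩)
    (Set.mem_Icc.2 ⟨zero_le_one, le_refl 1⟩) zero_le_one
  have hc0 : c 0 = a := by simp [hcdef]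
  have hc1 : c 1 = b := by simp [hcdef]
  simp only [hψ, hc0, hc1] at h01
  nlinarith [h01]

/-- Key inequality (half of Baillon–Haddad). -/
lemma key_ineq (E : F → ℝ) (E' : F → F) (L : ℝ) (hL : 0 < L)
    (hgrad : ∀ x, HasGradientAt E (E' x) x)
    (hmono : ∀ x x', (0:ℝ) ≤ ⟪x - x', E' x - E' x'⟫_ℝ)
    (hlip : ∀ x x', ‖E' x - E' x'‖ ≤ L * ‖x - x'‖) (x y : F) :
    E x + ⟪E' x, y - x⟫_ℝ + 1 / (2 * L) * ‖E' y - E' x‖ ^ 2 ≤ E y := by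
  set g : F → ℝ := fun z => E z - ⟪E' x, z⟫_ℝ with hg
  set g' : F → F := fun z => E' z - E' x with hg'
  have hggrad : ∀ z, HasGradientAt g (g' z) z := by
    intro z
    rw [hasGradientAt_iff_hasFDerivAt]
    have h1 := (hgrad z).hasFDerivAt
    have h2 : HasFDerivAt (fun w : F => ⟪E' x, w⟫_ℝ) (innerSL ℝ (E' x)) z :=
      (innerSL ℝ (E' x)).hasFDerivAt
    have := h1.sub h2
    refine this.congr_fderiv ?_
    ext w
    simp [hg', inner_sub_left]
  have hgmono : ∀ a b, (0:ℝ) ≤ ⟪a - b, g' a - g' b⟫_ℝ := by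
    intro a b
    have : g' a - g' b = E' a - E' b := by simp [hg']
    rw [this]; exact hmono a b
  have hglip : ∀ a b, ‖g' a - g' b‖ ≤ L * ‖a - b‖ := by
    intro a b
    have : g' a - g' b = E' a - E' b := by simp [hg']
    rw [this]; exact hlip a b
  set w : F := y - (1 / L) • (E' y - E' x) with hw
  have hgx : g' x = 0 := by simp [hg']
  have step1 : g x ≤ g w := by
    have := lower_bound g g' hggrad hgmono x w
    rw [hgx] at this
    simpa using this
  have step2 : g w ≤ g y - 1 / (2 * L) * ‖E' y - E' x‖ ^ 2 := by
    have := upper_bound g g' L hL hggrad hglip y w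
    have hwy : w - y = -((1 / L) • (E' y - E' x)) := by rw [hw]; abel
    have hin : ⟪g' y, w - y⟫_ℝ = -(1 / L) * ‖E' y - E' x‖ ^ 2 := by
      rw [hwy, inner_neg_right, real_inner_smul_right]
      have : g' y = E' y - E' x := rfl
      rw [this, real_inner_self_eq_norm_sq]
      ring
    have hnm : ‖w - y‖ ^ 2 = (1 / L) ^ 2 * ‖E' y - E' x‖ ^ 2 := by
      rw [hwy, norm_neg, norm_smul, mul_pow, Real.norm_eq_abs,
        abs_of_pos (by positivity : (0:ℝ) < 1 / L)]
    rw [hin, hnm] at this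
    have hL' : L ≠ 0 := ne_of_gt hL
    calc g w ≤ g y + -(1 / L) * ‖E' y - E' x‖ ^ 2
        + L / 2 * ((1 / L) ^ 2 * ‖E' y - E' x‖ ^ 2) := this
      _ = g y - 1 / (2 * L) * ‖E' y - E' x‖ ^ 2 := by field_simp; ring
  have : g x ≤ g y - 1 / (2 * L) * ‖E' y - E' x‖ ^ 2 := le_trans step1 step2
  simp only [hg] at this
  have hinner : ⟪E' x, y⟫_ℝ - ⟪E' x, x⟫_ℝ = ⟪E' x, y - x⟫_ℝ := by rw [inner_sub_right]
  linarith [this, hinner.symm.le, hinner.le]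

/-- Co-coercivity. -/
lemma cocoercive (E : F → ℝ) (E' : F → F) (L : ℝ) (hL : 0 < L)
    (hgrad : ∀ x, HasGradientAt E (E' x) x)
    (hmono : ∀ x x', (0:ℝ) ≤ ⟪x - x', E' x - E' x'⟫_ℝ)
    (hlip : ∀ x x', ‖E' x - E' x'‖ ≤ L * ‖x - x'‖) (x y : F) :
    1 / L * ‖E' x - E' y‖ ^ 2 ≤ ⟪x - y, E' x - E' y⟫_ℝ := by
  have h1 := key_ineq E E' L hL hgrad hmono hlip x y
  have h2 := key_ineq E E' L hL hgrad hmono hlip y x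
  have hsym : ‖E' x - E' y‖ = ‖E' y - E' x‖ := norm_sub_rev _ _
  have e1 : ⟪E' x, y - x⟫_ℝ = -⟪E' x, x - y⟫_ℝ := by
    rw [← inner_neg_right]; congr 1; abel
  have e2 : ⟪x - y, E' x - E' y⟫_ℝ = ⟪E' x, x - y⟫_ℝ - ⟪E' y, x - y⟫_ℝ := by
    rw [inner_sub_right, real_inner_comm (x - y) (E' x), real_inner_comm (x - y) (E' y)]
  rw [hsym, e2]
  rw [e1] at h1
  have hxy : ‖E' x - E' y‖ ^ 2 = ‖E' y - E' x‖ ^ 2 := by rw [hsym]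
  have hL' : (0:ℝ) < 2 * L := by positivity
  have : 1 / (2 * L) * ‖E' y - E' x‖ ^ 2 + 1 / (2 * L) * ‖E' x - E' y‖ ^ 2
      ≤ ⟪E' x, x - y⟫_ℝ - ⟪E' y, x - y⟫_ℝ := by linarith
  rw [hxy] at this
  calc 1 / L * ‖E' y - E' x‖ ^ 2
      = 1 / (2 * L) * ‖E' y - E' x‖ ^ 2 + 1 / (2 * L) * ‖E' y - E' x‖ ^ 2 := by
        field_simp; ring
    _ ≤ _ := this

end Aux

theorem stmt_2 {d : ℕ} (E : EuclideanSpace ℝ (Fin d) → ℝ)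
    (E' : EuclideanSpace ℝ (Fin d) → EuclideanSpace ℝ (Fin d))
    (m L : ℝ) (hm : 0 < m) (hmL : m ≤ L)
    (hgrad : ∀ x, HasGradientAt E (E' x) x)
    (hstrong : ∀ x x', ⟪x - x', E' x - E' x'⟫_ℝ ≥ m * ‖x - x'‖ ^ 2)
    (hlip : ∀ x x', ‖E' x - E' x'‖ ≤ L * ‖x - x'‖)
    (x : EuclideanSpace ℝ (Fin d)) (hx : ‖x‖ ≥ 4 * ‖E' 0‖ / m) :
    ⟪x, E' x⟫_ℝ ≥ ‖E' 0‖ * ‖x‖ + (1 / (4 * L)) * ‖E' x‖ ^ 2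
      - (1 / (2 * L)) * ‖E' 0‖ ^ 2 := by
  have hL : 0 < L := lt_of_lt_of_le hm hmL
  have hmono : ∀ a b : EuclideanSpace ℝ (Fin d), (0:ℝ) ≤ ⟪a - b, E' a - E' b⟫_ℝ := by
    intro a b
    have := hstrong a b
    nlinarith [sq_nonneg ‖a - b‖, hm.le, this]
  have hcoco := cocoercive E E' L hL hgrad hmono hlip x 0
  have hstr := hstrong x 0
  simp only [sub_zero] at hcoco hstr
  -- ⟪x, E' x⟫ = ⟪x, E' x - E' 0⟫ + ⟪x, E' 0⟫
  have hsplit : ⟪x, E' x⟫_ℝ = ⟪x, E' x - E' 0⟫_ℝ + ⟪x, E' 0⟫_ℝ := by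
    rw [inner_sub_right]; ring
  have hcs : -(‖E' 0‖ * ‖x‖) ≤ ⟪x, E' 0⟫_ℝ := by
    have := abs_real_inner_le_norm x (E' 0)
    rw [abs_le] at this
    calc -(‖E' 0‖ * ‖x‖) = -(‖x‖ * ‖E' 0‖) := by ring
      _ ≤ ⟪x, E' 0⟫_ℝ := this.1
  -- m‖x‖ ≥ 4‖E' 0‖
  have hmx : 4 * ‖E' 0‖ ≤ m * ‖x‖ := by
    rw [ge_iff_le, div_le_iff₀ hm] at hx
    linarith
  -- half of strong convexity term dominates 2‖E'0‖‖x‖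
  have h1 : 2 * ‖E' 0‖ * ‖x‖ ≤ m / 2 * ‖x‖ ^ 2 := by
    nlinarith [norm_nonneg x, hmx]
  -- norm comparison: ‖E' x‖² ≤ 2‖E' x - E' 0‖² + 2‖E' 0‖²
  have h2 : ‖E' x‖ ^ 2 ≤ 2 * ‖E' x - E' 0‖ ^ 2 + 2 * ‖E' 0‖ ^ 2 := by
    have htri : ‖E' x‖ ≤ ‖E' x - E' 0‖ + ‖E' 0‖ := by
      calc ‖E' x‖ = ‖(E' x - E' 0) + E' 0‖ := by congr 1; abel
        _ ≤ ‖E' x - E' 0‖ + ‖E' 0‖ := norm_add_le _ _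
    nlinarith [htri, sq_nonneg (‖E' x - E' 0‖ - ‖E' 0‖), norm_nonneg (E' x), norm_nonneg (E' x - E' 0), norm_nonneg (E' 0)]
  -- combine: ⟪x, E'x - E'0⟫ ≥ (m/2)‖x‖² + (1/(2L))‖E'x-E'0‖²
  have havg : m / 2 * ‖x‖ ^ 2 + 1 / (2 * L) * ‖E' x - E' 0‖ ^ 2 ≤ ⟪x, E' x - E' 0⟫_ℝ := by
    have ha : 1 / (2 * L) * ‖E' x - E' 0‖ ^ 2 = (1 / L * ‖E' x - E' 0‖ ^ 2) / 2 := by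
      rw [mul_comm (2:ℝ) L, ← div_div]; ring
    linarith [hcoco, hstr]
  have h3 : 1 / (4 * L) * ‖E' x‖ ^ 2 - 1 / (2 * L) * ‖E' 0‖ ^ 2
      ≤ 1 / (2 * L) * ‖E' x - E' 0‖ ^ 2 := by
    have h4L : (0:ℝ) < 4 * L := by positivity
    have := mul_le_mul_of_nonneg_left h2 (le_of_lt (by positivity : (0:ℝ) < 1 / (4 * L)))
    calc 1 / (4 * L) * ‖E' x‖ ^ 2 - 1 / (2 * L) * ‖E' 0‖ ^ 2
        ≤ 1 / (4 * L) * (2 * ‖E' x - E' 0‖ ^ 2 + 2 * ‖E' 0‖ ^ 2)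
          - 1 / (2 * L) * ‖E' 0‖ ^ 2 := by linarith
      _ = 1 / (2 * L) * ‖E' x - E' 0‖ ^ 2 := by field_simp; ring
  rw [hsplit]
  linarith [havg, hcs, h1, h3]
end

section
/- Let E : ℝ^d → ℝ be differentiable, m-strongly convex with L-Lipschitz gradient (0 < m ≤ L). Then for every x ∈ ℝ^d with ‖x‖ ≤ 4‖∇E(0)‖/m, one has ⟨x, ∇E(x)⟩ ≥ (1/(4L))‖∇E(x)‖² - (4/m + 1/(2L))‖∇E(0)‖². -/
open scoped InnerProductSpace
open InnerProductSpace

section aux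

variable {d : ℕ} (E : EuclideanSpace ℝ (Fin d) → ℝ)
    (E' : EuclideanSpace ℝ (Fin d) → EuclideanSpace ℝ (Fin d))

/-- Convexity inequality from monotone gradient. -/
lemma aux_convex_ineq (m : ℝ) (hm : 0 < m)
    (hgrad : ∀ x, HasGradientAt E (E' x) x)
    (hstrong : ∀ x x', ⟪x - x', E' x - E' x'⟫_ℝ ≥ m * ‖x - x'‖ ^ 2)
    (a b : EuclideanSpace ℝ (Fin d)) :
    E a + ⟪E' a, b - a⟫_ℝ ≤ E b := by
  set v := b - a with hv
  set f : ℝ → ℝ := fun t => E (a + t • v) - t * ⟪E' a, v⟫_ℝ with hf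
  have hder : ∀ t : ℝ, HasDerivAt f (⟪E' (a + t • v), v⟫_ℝ - ⟪E' a, v⟫_ℝ) t := by
    intro t
    have hline : HasDerivAt (fun t : ℝ => a + t • v) v t := by
      simpa using ((hasDerivAt_id t).smul_const v).const_add a
    have h1 : HasDerivAt (fun t : ℝ => E (a + t • v)) (⟪E' (a + t • v), v⟫_ℝ) t := by
      have := (hgrad (a + t • v)).hasFDerivAt.comp_hasDerivAt t hline
      simpa [InnerProductSpace.toDual_apply_apply, Function.comp_def] using this
    have h2 : HasDerivAt (fun t : ℝ => t * ⟪E' a, v⟫_ℝ) (⟪E' a, v⟫_ℝ) t := by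
      simpa using (hasDerivAt_id t).mul_const (⟪E' a, v⟫_ℝ)
    exact h1.sub h2
  have hmono : MonotoneOn f (Set.Icc (0:ℝ) 1) := by
    apply monotoneOn_of_deriv_nonneg (convex_Icc 0 1)
    · exact fun t _ => (hder t).differentiableAt.continuousAt.continuousWithinAt
    · exact fun t _ => ((hder t).differentiableAt).differentiableWithinAt
    · intro t ht
      rw [interior_Icc] at ht
      rw [(hder t).deriv]
      have hs := hstrong (a + t • v) a
      have hsub : (a + t • v) - a = t • v := by abel
      rw [hsub] at hs
      have h1 : ⟪t • v, E' (a + t • v) - E' a⟫_ℝ ≥ 0 := le_trans (by positivity) hs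
      rw [real_inner_smul_left] at h1
      have h2 : ⟪v, E' (a + t • v) - E' a⟫_ℝ ≥ 0 := nonneg_of_mul_nonneg_right h1 ht.1
      rw [real_inner_comm, inner_sub_left] at h2
      linarith
  have := hmono (Set.mem_Icc.2 ⟨le_refl 0, zero_le_one⟩) (Set.mem_Icc.2 ⟨zero_le_one, le_refl 1⟩) zero_le_one
  simp only [hf, zero_smul, one_smul, add_zero, zero_mul, sub_zero, one_mul] at this
  have hb : a + v = b := by rw [hv]; abel
  rw [hb] at this
  linarith

end aux

section aux2
variable {d : ℕ} (E : EuclideanSpace ℝ (Fin d) → ℝ)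
    (E' : EuclideanSpace ℝ (Fin d) → EuclideanSpace ℝ (Fin d))

/-- Descent-type inequality from Lipschitz gradient (with constant L instead of L/2). -/
lemma aux_descent (L : ℝ)
    (hgrad : ∀ x, HasGradientAt E (E' x) x)
    (hlip : ∀ x x', ‖E' x - E' x'‖ ≤ L * ‖x - x'‖)
    (a b : EuclideanSpace ℝ (Fin d)) :
    E b ≤ E a + ⟪E' a, b - a⟫_ℝ + L * ‖b - a‖ ^ 2 := by
  set g : EuclideanSpace ℝ (Fin d) → ℝ := fun z => E z - ⟪E' a, z⟫_ℝ with hg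
  set g' : EuclideanSpace ℝ (Fin d) → (EuclideanSpace ℝ (Fin d)) →L[ℝ] ℝ :=
    fun z => (toDual ℝ _ (E' z) : _ →L[ℝ] ℝ) - (toDual ℝ _ (E' a) : _ →L[ℝ] ℝ) with hg'
  have key : ‖g b - g a‖ ≤ (L * ‖b - a‖) * ‖b - a‖ := by
    apply Convex.norm_image_sub_le_of_norm_hasFDerivWithin_le (s := segment ℝ a b)
      (f' := g')
    · intro z _
      exact (((hgrad z).hasFDerivAt).sub ((toDual ℝ _ (E' a) : _ →L[ℝ] ℝ).hasFDerivAt)).hasFDerivWithinAt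
    · intro z hz
      have h1 : ‖g' z‖ = ‖E' z - E' a‖ := by
        show ‖(toDual ℝ (EuclideanSpace ℝ (Fin d))) (E' z) - (toDual ℝ (EuclideanSpace ℝ (Fin d))) (E' a)‖ = _
        rw [← map_sub (toDual ℝ (EuclideanSpace ℝ (Fin d)))]
        exact (toDual ℝ (EuclideanSpace ℝ (Fin d))).norm_map _
      rw [h1]
      obtain ⟨s, t, hs, ht, hst, rfl⟩ := hz
      have hza : (s • a + t • b) - a = t • (b - a) := by
        have hs1 : s = 1 - t := by linarith
        rw [hs1]; module
      calc ‖E' (s • a + t • b) - E' a‖ ≤ L * ‖(s • a + t • b) - a‖ := hlip _ _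
        _ = L * (t * ‖b - a‖) := by rw [hza, norm_smul, Real.norm_eq_abs, abs_of_nonneg ht]
        _ ≤ L * ‖b - a‖ := by
            have h0 : 0 ≤ L * ‖b - a‖ := le_trans (norm_nonneg _) (hlip b a)
            nlinarith [norm_nonneg (b - a)]
    · exact convex_segment a b
    · exact left_mem_segment ℝ a b
    · exact right_mem_segment ℝ a b
  have hdiff : g b - g a = E b - E a - ⟪E' a, b - a⟫_ℝ := by
    simp only [hg, inner_sub_right]; ring
  rw [hdiff, Real.norm_eq_abs] at key
  have := abs_le.1 key
  nlinarith [this.2, sq_abs (‖b - a‖)]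

end aux2

section aux3
variable {d : ℕ} (E : EuclideanSpace ℝ (Fin d) → ℝ)
    (E' : EuclideanSpace ℝ (Fin d) → EuclideanSpace ℝ (Fin d))

lemma aux_half (m L : ℝ) (hm : 0 < m) (hmL : m ≤ L)
    (hgrad : ∀ x, HasGradientAt E (E' x) x)
    (hstrong : ∀ x x', ⟪x - x', E' x - E' x'⟫_ℝ ≥ m * ‖x - x'‖ ^ 2)
    (hlip : ∀ x x', ‖E' x - E' x'‖ ≤ L * ‖x - x'‖)
    (x y : EuclideanSpace ℝ (Fin d)) :
    E y + ⟪E' y, x - y⟫_ℝ ≤ E x - (1 / (4 * L)) * ‖E' x - E' y‖ ^ 2 := by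
  have hL : 0 < L := lt_of_lt_of_le hm hmL
  set g := E' x - E' y with hgdef
  set b := x - (1 / (2 * L)) • g with hbdef
  have h1 := aux_convex_ineq E E' m hm hgrad hstrong y b
  have h2 := aux_descent E E' L hgrad hlip x b
  have hbx : b - x = -((1 / (2 * L)) • g) := by rw [hbdef]; abel
  have e1 : ⟪E' x, b - x⟫_ℝ = -((1 / (2 * L)) * ⟪E' x, g⟫_ℝ) := by
    rw [hbx, inner_neg_right, real_inner_smul_right]
  have e2 : ‖b - x‖ ^ 2 = (1 / (2 * L))^2 * ‖g‖ ^ 2 := by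
    rw [hbx, norm_neg, norm_smul, mul_pow, Real.norm_eq_abs, sq_abs]
  have hby : b - y = (x - y) - (1 / (2 * L)) • g := by rw [hbdef]; abel
  have e3 : ⟪E' y, b - y⟫_ℝ = ⟪E' y, x - y⟫_ℝ - (1 / (2 * L)) * ⟪E' y, g⟫_ℝ := by
    rw [hby, inner_sub_right, real_inner_smul_right]
  have e4 : ⟪E' x, g⟫_ℝ - ⟪E' y, g⟫_ℝ = ‖g‖ ^ 2 := by
    rw [← inner_sub_left, ← hgdef, real_inner_self_eq_norm_sq]
  have e5 : L * (1 / (2 * L))^2 = 1 / (4 * L) := by field_simp; ring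
  have e6 : (1 / (2 * L)) * ‖g‖ ^ 2 - (1 / (4 * L)) * ‖g‖ ^ 2 = (1 / (4 * L)) * ‖g‖ ^ 2 := by
    field_simp; ring
  rw [e3] at h1
  rw [e1, e2] at h2
  have e4' : (1 / (2 * L)) * ⟪E' x, g⟫_ℝ - (1 / (2 * L)) * ⟪E' y, g⟫_ℝ
      = (1 / (2 * L)) * ‖g‖ ^ 2 := by rw [← mul_sub, e4]
  have e5' : L * ((1 / (2 * L)) ^ 2 * ‖g‖ ^ 2) = (1 / (4 * L)) * ‖g‖ ^ 2 := by
    rw [← mul_assoc, e5]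
  linarith

lemma aux_coco (m L : ℝ) (hm : 0 < m) (hmL : m ≤ L)
    (hgrad : ∀ x, HasGradientAt E (E' x) x)
    (hstrong : ∀ x x', ⟪x - x', E' x - E' x'⟫_ℝ ≥ m * ‖x - x'‖ ^ 2)
    (hlip : ∀ x x', ‖E' x - E' x'‖ ≤ L * ‖x - x'‖)
    (x y : EuclideanSpace ℝ (Fin d)) :
    ⟪x - y, E' x - E' y⟫_ℝ ≥ (1 / (2 * L)) * ‖E' x - E' y‖ ^ 2 := by
  have h1 := aux_half E E' m L hm hmL hgrad hstrong hlip x y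
  have h2 := aux_half E E' m L hm hmL hgrad hstrong hlip y x
  have hn : ‖E' y - E' x‖ = ‖E' x - E' y‖ := norm_sub_rev _ _
  rw [hn] at h2
  have e1 : ⟪E' x, y - x⟫_ℝ = -⟪E' x, x - y⟫_ℝ := by
    rw [← inner_neg_right]; congr 1; abel
  rw [e1] at h2
  have e2 : ⟪E' y, x - y⟫_ℝ - ⟪E' x, x - y⟫_ℝ = -⟪x - y, E' x - E' y⟫_ℝ := by
    rw [← inner_sub_left, real_inner_comm, ← inner_neg_right]
    congr 1; abel
  have e7 : (1 / (2 * L)) * ‖E' x - E' y‖ ^ 2 = 2 * ((1 / (4 * L)) * ‖E' x - E' y‖ ^ 2) := by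
    have hL : 0 < L := lt_of_lt_of_le hm hmL
    field_simp; ring
  linarith

end aux3

theorem stmt_3 {d : ℕ} (E : EuclideanSpace ℝ (Fin d) → ℝ)
    (E' : EuclideanSpace ℝ (Fin d) → EuclideanSpace ℝ (Fin d))
    (m L : ℝ) (hm : 0 < m) (hmL : m ≤ L)
    (hgrad : ∀ x, HasGradientAt E (E' x) x)
    (hstrong : ∀ x x', ⟪x - x', E' x - E' x'⟫_ℝ ≥ m * ‖x - x'‖ ^ 2)
    (hlip : ∀ x x', ‖E' x - E' x'‖ ≤ L * ‖x - x'‖)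
    (x : EuclideanSpace ℝ (Fin d)) (hx : ‖x‖ ≤ 4 * ‖E' 0‖ / m) :
    ⟪x, E' x⟫_ℝ ≥ (1 / (4 * L)) * ‖E' x‖ ^ 2
      - (4 / m + 1 / (2 * L)) * ‖E' 0‖ ^ 2 := by
  have hL : 0 < L := lt_of_lt_of_le hm hmL
  have hco := aux_coco E E' m L hm hmL hgrad hstrong hlip x 0
  rw [sub_zero] at hco
  set g := E' x - E' 0 with hgdef
  set B := ‖E' 0‖ with hB
  set G := ‖g‖ with hG
  set N := ‖E' x‖ with hN
  set X := ‖x‖ with hX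
  have hsplit : ⟪x, g⟫_ℝ = ⟪x, E' x⟫_ℝ - ⟪x, E' 0⟫_ℝ := by
    rw [hgdef, inner_sub_right]
  have hip : ⟪x, E' 0⟫_ℝ ≥ -(X * B) := by
    have := abs_real_inner_le_norm x (E' 0)
    have := abs_le.1 this
    linarith [this.1]
  have hCn : N ≤ G + B := by
    have hEx : E' x = g + E' 0 := by rw [hgdef]; abel
    rw [hN, hEx]; exact norm_add_le _ _
  have hN2 : N ^ 2 ≤ (G + B) ^ 2 := by
    have h0 : (0:ℝ) ≤ N := norm_nonneg _
    nlinarith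
  have hN2' : (1 / (4 * L)) * N ^ 2 ≤ (1 / (4 * L)) * (G + B) ^ 2 :=
    mul_le_mul_of_nonneg_left hN2 (by positivity)
  have hsq : (1 / (4 * L)) * (G + B) ^ 2 ≤ (1 / (2 * L)) * G ^ 2 + (1 / (2 * L)) * B ^ 2 := by
    have key : (1 / (4 * L)) * (G + B) ^ 2 - ((1 / (2 * L)) * G ^ 2 + (1 / (2 * L)) * B ^ 2)
        = -((G - B) ^ 2 / (4 * L)) := by field_simp; ring
    nlinarith [sq_nonneg (G - B), div_nonneg (sq_nonneg (G - B)) (by positivity : (0:ℝ) ≤ 4 * L)]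
  have hXB : X * B ≤ (4 / m) * B ^ 2 := by
    have hB0 : (0:ℝ) ≤ B := norm_nonneg _
    have := mul_le_mul_of_nonneg_right hx hB0
    have e : (4 * B / m) * B = (4 / m) * B ^ 2 := by ring
    linarith [e ▸ this]
  rw [hsplit] at hco
  linarith
end
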